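/- Let H be a Banach space, (Π_t)_{|t|<δ} a differentiable family of finite-rank projectors on H with Π_t = Π + tP + o(t), and (A_t)_{|t|<δ} a C¹ family of bounded operators on H such that A_t commutes with Π_t for every t. Then the function t ↦ tr(A_t Π_t) (trace of the finite-rank operator A_t Π_t) is differentiable at t = 0 with derivative tr(Ȧ Π), where Ȧ = (d/dt)|_{t=0} A_t and Π = Π_0. -/

import Mathlib

set_option maxHeartbeats 1000000

set_option synthInstance.maxHeartbeats 1000000

open LinearMap in
lemma key_trace {H : Type*} [NormedAddCommGroup H] [NormedSpace ℝ H]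
    (Q R B : H →L[ℝ] H)
    (hQQ : Q.comp Q = Q) (hRR : R.comp R = R)
    [FiniteDimensional ℝ ↥(LinearMap.range ((Q : H →L[ℝ] H) : H →ₗ[ℝ] H))]
    [FiniteDimensional ℝ ↥(LinearMap.range ((R : H →L[ℝ] H) : H →ₗ[ℝ] H))]
    (hu : ∀ x : H, x ∈ LinearMap.range ((Q : H →L[ℝ] H) : H →ₗ[ℝ] H) → R x = 0 → x = 0)
    (hv : ∀ x : H, x ∈ LinearMap.range ((R : H →L[ℝ] H) : H →ₗ[ℝ] H) → Q x = 0 → x = 0)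
    (w m : ↥(LinearMap.range ((Q : H →L[ℝ] H) : H →ₗ[ℝ] H)) →ₗ[ℝ]
      ↥(LinearMap.range ((Q : H →L[ℝ] H) : H →ₗ[ℝ] H)))
    (g : ↥(LinearMap.range ((Q : H →L[ℝ] H) : H →ₗ[ℝ] H)) →ₗ[ℝ]
      ↥(LinearMap.range ((Q : H →L[ℝ] H) : H →ₗ[ℝ] H)))
    (hg : ∀ x, (g x : H) = Q (R (x : H)))
    (hm : ∀ x, (m x : H) = Q (R (B (R (x : H)))))
    (hw : w ∘ₗ g = LinearMap.id) :
    LinearMap.trace ℝ ↥(LinearMap.range ((R : H →L[ℝ] H) : H →ₗ[ℝ] H))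
      (LinearMap.restrict ((R.comp (B.comp R) : H →L[ℝ] H) : H →ₗ[ℝ] H)
        (fun x _ => ⟨B (R x), rfl⟩))
    = LinearMap.trace ℝ ↥(LinearMap.range ((Q : H →L[ℝ] H) : H →ₗ[ℝ] H)) (w ∘ₗ m) := by
  classical
  have hQid : ∀ x : H, Q (Q x) = Q x := fun x => by
    rw [← ContinuousLinearMap.comp_apply, hQQ]
  have hRid : ∀ x : H, R (R x) = R x := fun x => by
    rw [← ContinuousLinearMap.comp_apply, hRR]
  have hQmem : ∀ x : H, x ∈ LinearMap.range ((Q : H →L[ℝ] H) : H →ₗ[ℝ] H) → Q x = x := by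
    rintro x ⟨y, rfl⟩; exact hQid y
  have hRmem : ∀ x : H, x ∈ LinearMap.range ((R : H →L[ℝ] H) : H →ₗ[ℝ] H) → R x = x := by
    rintro x ⟨y, rfl⟩; exact hRid y
  -- the maps u : V → W, v : W → V
  set u : ↥(LinearMap.range ((Q : H →L[ℝ] H) : H →ₗ[ℝ] H)) →ₗ[ℝ] ↥(LinearMap.range ((R : H →L[ℝ] H) : H →ₗ[ℝ] H)) := LinearMap.restrict ((R : H →L[ℝ] H) : H →ₗ[ℝ] H)
    (p := LinearMap.range ((Q : H →L[ℝ] H) : H →ₗ[ℝ] H))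
    (q := LinearMap.range ((R : H →L[ℝ] H) : H →ₗ[ℝ] H)) (fun x _ => ⟨x, rfl⟩) with hu_def
  set v : ↥(LinearMap.range ((R : H →L[ℝ] H) : H →ₗ[ℝ] H)) →ₗ[ℝ] ↥(LinearMap.range ((Q : H →L[ℝ] H) : H →ₗ[ℝ] H)) := LinearMap.restrict ((Q : H →L[ℝ] H) : H →ₗ[ℝ] H)
    (p := LinearMap.range ((R : H →L[ℝ] H) : H →ₗ[ℝ] H))
    (q := LinearMap.range ((Q : H →L[ℝ] H) : H →ₗ[ℝ] H)) (fun x _ => ⟨x, rfl⟩) with hv_def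
  have hu_inj : Function.Injective u := by
    rw [← LinearMap.ker_eq_bot, LinearMap.ker_eq_bot']
    intro z hz
    have : R (z : H) = 0 := congrArg Subtype.val hz
    exact Subtype.ext (hu _ z.2 this)
  have hv_inj : Function.Injective v := by
    rw [← LinearMap.ker_eq_bot, LinearMap.ker_eq_bot']
    intro z hz
    have : Q (z : H) = 0 := congrArg Subtype.val hz
    exact Subtype.ext (hv _ z.2 this)
  have hrank : Module.finrank ℝ ↥(LinearMap.range ((Q : H →L[ℝ] H) : H →ₗ[ℝ] H)) = Module.finrank ℝ ↥(LinearMap.range ((R : H →L[ℝ] H) : H →ₗ[ℝ] H)) :=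
    le_antisymm (LinearMap.finrank_le_finrank_of_injective hu_inj)
      (LinearMap.finrank_le_finrank_of_injective hv_inj)
  have hu_surj : Function.Surjective u :=
    (LinearMap.injective_iff_surjective_of_finrank_eq_finrank hrank).mp hu_inj
  set e : ↥(LinearMap.range ((Q : H →L[ℝ] H) : H →ₗ[ℝ] H)) ≃ₗ[ℝ] ↥(LinearMap.range ((R : H →L[ℝ] H) : H →ₗ[ℝ] H)) := LinearEquiv.ofBijective u ⟨hu_inj, hu_surj⟩ with he
  set B' : ↥(LinearMap.range ((R : H →L[ℝ] H) : H →ₗ[ℝ] H)) →ₗ[ℝ] ↥(LinearMap.range ((R : H →L[ℝ] H) : H →ₗ[ℝ] H)) := LinearMap.restrict ((R.comp (B.comp R) : H →L[ℝ] H) : H →ₗ[ℝ] H)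
    (fun x _ => ⟨B (R x), rfl⟩) with hB'
  have h1 : LinearMap.trace ℝ ↥(LinearMap.range ((R : H →L[ℝ] H) : H →ₗ[ℝ] H)) B'
      = LinearMap.trace ℝ ↥(LinearMap.range ((Q : H →L[ℝ] H) : H →ₗ[ℝ] H)) (e.symm.conj B') :=
    (LinearMap.trace_conj' B' e.symm).symm
  have hwvu : ∀ y, w (v (u y)) = y := by
    intro y
    have h2 : v (u y) = g y := by
      apply Subtype.ext
      rw [hg]
      rfl
    rw [h2, ← LinearMap.comp_apply, hw, LinearMap.id_apply]
  have hesymm : ∀ z, e.symm z = w (v z) := by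
    intro z
    obtain ⟨x, rfl⟩ := hu_surj z
    have : e x = u x := rfl
    rw [← this, e.symm_apply_apply, this, hwvu]
  have hkey : e.symm.conj B' = w ∘ₗ m := by
    apply LinearMap.ext
    intro x
    have h3 : (e.symm.conj B') x = e.symm (B' (e x)) := rfl
    rw [h3, hesymm]
    show w (v (B' (u x))) = (w ∘ₗ m) x
    have h5 : v (B' (u x)) = m x := by
      apply Subtype.ext
      rw [hm]
      show Q (R (B (R (R (x : H))))) = Q (R (B (R (x : H))))
      rw [hRid]
    rw [h5, LinearMap.comp_apply]
  rw [h1, hkey]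


def instTower (E : Type*) [NormedAddCommGroup E] [NormedSpace ℝ E] :
    IsScalarTower ℝ (E →L[ℝ] E) (E →L[ℝ] E) := inferInstance

def instComm (E : Type*) [NormedAddCommGroup E] [NormedSpace ℝ E] :
    SMulCommClass ℝ (E →L[ℝ] E) (E →L[ℝ] E) := inferInstance

lemma clm_comp_hasDerivAt' {E F : Type*} [NormedAddCommGroup E] [NormedSpace ℝ E]
    [NormedAddCommGroup F] [NormedSpace ℝ F]
    (L : E →L[ℝ] F) {f : ℝ → E} {f' : E} {x : ℝ} (h : HasDerivAt f f' x) :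
    HasDerivAt (fun t => L (f t)) (L f') x := by
  have hLd : HasFDerivAt L L (f x) := L.hasFDerivAt
  exact hLd.comp_hasDerivAt x h

lemma deriv_inverse_mul {A : Type*} [NormedRing A] [NormedAlgebra ℝ A] [CompleteSpace A]
    {g h : ℝ → A} {g' h' : A} (hg : HasDerivAt g g' 0) (hh : HasDerivAt h h' 0)
    (hg1 : g 0 = 1) :
    HasDerivAt (fun t => Ring.inverse (g t) * h t) (-g' * h 0 + h') 0 := by
  have hI : HasFDerivAt Ring.inverse (-(ContinuousLinearMap.mulLeftRight ℝ A 1 1)) (g 0) := by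
    rw [hg1]
    simpa using hasFDerivAt_ringInverse (𝕜 := ℝ) (R := A) 1
  have hinv : HasDerivAt (fun t => Ring.inverse (g t)) (-g') 0 := by
    have h2 := hI.comp_hasDerivAt 0 hg
    simpa [ContinuousLinearMap.mulLeftRight_apply, Function.comp_def] using h2
  have h3 := hinv.mul hh
  simpa [hg1, Ring.inverse_one, Pi.mul_def] using h3

/-!
STATEMENT 12.  `(Pr t)_{|t|<δ}` is a differentiable family of finite-rank
projectors on a Banach space `H` (`Pr t = Pr 0 + t•P + o(t)`), and
`(A t)_{|t|<δ}` is a `C¹` family of bounded operators with `A t` commuting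
with `Pr t`.  The trace of the finite-rank operator `A_t ∘ Pr_t` is computed
as the trace of the restriction of `Pr_t ∘ A_t ∘ Pr_t` to the (finite
dimensional) range of `Pr t`; for `|t| < δ` this restriction coincides with
that of `A_t ∘ Pr_t` since `A_t` and `Pr_t` commute.  This function of `t` is
differentiable at `t = 0` with derivative `tr(Pr₀ ∘ Ȧ₀ |_{ran Pr₀})`. -/
theorem stmt12 (H : Type*) [NormedAddCommGroup H] [NormedSpace ℝ H]
    [CompleteSpace H]
    (δ : ℝ) (hδ : 0 < δ) (Pr : ℝ → (H →L[ℝ] H))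
    (hproj : ∀ t : ℝ, |t| < δ → (Pr t).comp (Pr t) = Pr t)
    (hfin : ∀ t : ℝ, |t| < δ →
      FiniteDimensional ℝ ↥(LinearMap.range ((Pr t : H →L[ℝ] H) : H →ₗ[ℝ] H)))
    (P : H →L[ℝ] H) (hdiff : HasDerivAt Pr P 0)
    (A A' : ℝ → (H →L[ℝ] H))
    (hA : ∀ t : ℝ, |t| < δ → HasDerivAt A (A' t) t)
    (hA'cont : ContinuousOn A' (Set.Ioo (-δ) δ))
    (hcomm : ∀ t : ℝ, |t| < δ → (A t).comp (Pr t) = (Pr t).comp (A t)) :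
    HasDerivAt
      (fun t : ℝ =>
        LinearMap.trace ℝ ↥(LinearMap.range ((Pr t : H →L[ℝ] H) : H →ₗ[ℝ] H))
          (LinearMap.restrict
            (((Pr t).comp ((A t).comp (Pr t)) : H →L[ℝ] H) : H →ₗ[ℝ] H)
            (fun x _ => ⟨(A t) ((Pr t) x), rfl⟩)))
      (LinearMap.trace ℝ ↥(LinearMap.range ((Pr 0 : H →L[ℝ] H) : H →ₗ[ℝ] H))
        (LinearMap.restrict
          (((Pr 0).comp (A' 0) : H →L[ℝ] H) : H →ₗ[ℝ] H)
          (fun x _ => ⟨(A' 0) x, rfl⟩)))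
      0 := by
  classical
  have h0δ : |(0:ℝ)| < δ := by simpa using hδ
  have hQQ : (Pr 0).comp (Pr 0) = Pr 0 := hproj 0 h0δ
  haveI hfQ : FiniteDimensional ℝ ↥(LinearMap.range ((Pr 0 : H →L[ℝ] H) : H →ₗ[ℝ] H)) :=
    hfin 0 h0δ
  have hQid : ∀ x : H, Pr 0 (Pr 0 x) = Pr 0 x := fun x => by
    rw [← ContinuousLinearMap.comp_apply, hQQ]
  have hQmem : ∀ x : H, x ∈ LinearMap.range ((Pr 0 : H →L[ℝ] H) : H →ₗ[ℝ] H) → Pr 0 x = x := by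
    rintro x ⟨y, rfl⟩; exact hQid y
  -- notation
  set V : Submodule ℝ H := LinearMap.range ((Pr 0 : H →L[ℝ] H) : H →ₗ[ℝ] H) with hVdef
  set ι : ↥V →L[ℝ] H := V.subtypeL with hιdef
  set π : H →L[ℝ] ↥V := (Pr 0).codRestrict V (fun x => ⟨x, rfl⟩) with hπdef
  set Lop : (H →L[ℝ] H) →L[ℝ] (↥V →L[ℝ] ↥V) :=
    (((ContinuousLinearMap.compL ℝ ↥V H ↥V).flip ι).comp
      ((ContinuousLinearMap.compL ℝ H H ↥V) π)) with hLdef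
  have hLapp : ∀ (M : H →L[ℝ] H) (x : ↥V), Lop M x = π (M (ι x)) := fun M x => rfl
  -- the trace functional
  set T : (↥V →L[ℝ] ↥V) →L[ℝ] ℝ :=
    LinearMap.toContinuousLinearMap
      ((LinearMap.trace ℝ ↥V).comp (ContinuousLinearMap.coeLM ℝ)) with hTdef
  have hTapp : ∀ M : ↥V →L[ℝ] ↥V, T M = LinearMap.trace ℝ ↥V (M : ↥V →ₗ[ℝ] ↥V) := fun M => by
    simp [hTdef]
  -- basic derivative facts
  have hg : HasDerivAt (fun t => Lop (Pr t)) (Lop P) 0 := by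
    have hLd : HasFDerivAt Lop Lop (Pr 0) := by apply ContinuousLinearMap.hasFDerivAt
    exact hLd.comp_hasDerivAt (E := ↥V →L[ℝ] ↥V) 0 hdiff
  have hM : HasDerivAt (fun t => Pr t * (A t * Pr t))
      (P * (A 0 * Pr 0) + Pr 0 * (A' 0 * Pr 0 + A 0 * P)) 0 :=
    hdiff.mul ((hA 0 h0δ).mul hdiff)
  have hh : HasDerivAt (fun t => Lop (Pr t * (A t * Pr t)))
      (Lop (P * (A 0 * Pr 0) + Pr 0 * (A' 0 * Pr 0 + A 0 * P))) 0 := by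
    have hLd : HasFDerivAt Lop Lop (Pr 0 * (A 0 * Pr 0)) := by
      apply ContinuousLinearMap.hasFDerivAt
    exact hLd.comp_hasDerivAt (E := ↥V →L[ℝ] ↥V) 0 hM
  have hg1 : Lop (Pr 0) = 1 := by
    refine ContinuousLinearMap.ext fun x => ?_
    apply Subtype.ext
    show Pr 0 (Pr 0 (x : H)) = (((1 : ↥V →L[ℝ] ↥V)) x : H)
    rw [ContinuousLinearMap.one_apply, hQid, hQmem _ x.2]
  haveI : CompleteSpace ↥V := FiniteDimensional.complete ℝ ↥V
  haveI := instTower ↥V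
  haveI := instComm ↥V
  haveI : CompleteSpace ↥V := FiniteDimensional.complete ℝ ↥V
  haveI := instTower ↥V
  haveI := instComm ↥V
  have hprod : HasDerivAt (fun t => Ring.inverse (Lop (Pr t)) * Lop (Pr t * (A t * Pr t)))
      ((-(Lop P)) * Lop (Pr 0 * (A 0 * Pr 0)) +
        Lop (P * (A 0 * Pr 0) + Pr 0 * (A' 0 * Pr 0 + A 0 * P))) 0 := by
    have := deriv_inverse_mul (A := ↥V →L[ℝ] ↥V) hg hh hg1
    exact this
  have hfinal : HasDerivAt
      (fun t => T (Ring.inverse (Lop (Pr t)) * Lop (Pr t * (A t * Pr t))))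
      (T ((-(Lop P)) * Lop (Pr 0 * (A 0 * Pr 0)) +
        Lop (P * (A 0 * Pr 0) + Pr 0 * (A' 0 * Pr 0 + A 0 * P)))) 0 := by
    exact clm_comp_hasDerivAt' (E := ↥V →L[ℝ] ↥V) T hprod
  -- algebraic identities
  have hQmul : Pr 0 * Pr 0 = Pr 0 := by rw [ContinuousLinearMap.mul_def]; exact hQQ
  have hcomm0 : A 0 * Pr 0 = Pr 0 * A 0 := by
    rw [ContinuousLinearMap.mul_def, ContinuousLinearMap.mul_def]; exact hcomm 0 h0δ
  have hev0 : ∀ᶠ t in nhds (0:ℝ), |t| < δ := by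
    filter_upwards [Metric.ball_mem_nhds (0:ℝ) hδ] with t ht
    simpa [Real.dist_eq] using ht
  have hPrel : P * Pr 0 + Pr 0 * P = P := by
    have h1 : HasDerivAt (fun t => Pr t * Pr t) (P * Pr 0 + Pr 0 * P) 0 := hdiff.mul hdiff
    have h2 : (fun t => Pr t * Pr t) =ᶠ[nhds (0:ℝ)] Pr := by
      filter_upwards [hev0] with t ht
      rw [ContinuousLinearMap.mul_def]; exact hproj t ht
    exact (h1.congr_of_eventuallyEq h2.symm).unique hdiff
  have habsL : ∀ a : H →L[ℝ] H, Lop (Pr 0 * a) = Lop a := fun a => by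
    refine ContinuousLinearMap.ext fun x => ?_
    apply Subtype.ext
    show Pr 0 ((Pr 0 * a) (x : H)) = Pr 0 (a (x : H))
    rw [ContinuousLinearMap.mul_apply, hQid]
  have habsR : ∀ a : H →L[ℝ] H, Lop (a * Pr 0) = Lop a := fun a => by
    refine ContinuousLinearMap.ext fun x => ?_
    apply Subtype.ext
    show Pr 0 ((a * Pr 0) (x : H)) = Pr 0 (a (x : H))
    rw [ContinuousLinearMap.mul_apply, hQmem _ x.2]
  have hLmul : ∀ a b : H →L[ℝ] H, Lop a * Lop b = Lop (a * (Pr 0 * b)) := fun a b => by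
    refine ContinuousLinearMap.ext fun x => ?_
    apply Subtype.ext; rfl
  -- derivative value
  have hAc : ∀ y : H, A 0 (Pr 0 y) = Pr 0 (A 0 y) := fun y => by
    rw [← ContinuousLinearMap.comp_apply, hcomm 0 h0δ, ContinuousLinearMap.comp_apply]
  have hQP0 : ∀ y : H, Pr 0 (P (Pr 0 y)) = 0 := fun y => by
    have h4 := congrArg (fun (M : H →L[ℝ] H) => M (Pr 0 y)) hPrel
    simp only [ContinuousLinearMap.add_apply, ContinuousLinearMap.mul_apply] at h4
    rw [hQid] at h4
    have h5 : P (Pr 0 y) + Pr 0 (P (Pr 0 y)) = P (Pr 0 y) + 0 := by rw [add_zero]; exact h4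
    exact add_left_cancel h5
  have hval : T ((-(Lop P)) * Lop (Pr 0 * (A 0 * Pr 0)) +
        Lop (P * (A 0 * Pr 0) + Pr 0 * (A' 0 * Pr 0 + A 0 * P)))
      = LinearMap.trace ℝ ↥V
        (LinearMap.restrict (((Pr 0).comp (A' 0) : H →L[ℝ] H) : H →ₗ[ℝ] H)
          (fun x _ => ⟨(A' 0) x, rfl⟩)) := by
    rw [hTapp]
    refine congrArg (LinearMap.trace ℝ ↥V) ?_
    apply LinearMap.ext; intro x
    apply Subtype.ext
    have hx : Pr 0 (x : H) = (x : H) := hQmem _ x.2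
    show -(Pr 0 (P (Pr 0 (Pr 0 (A 0 (Pr 0 (x : H)))))))
        + Pr 0 (P (A 0 (Pr 0 (x : H))) + Pr 0 (A' 0 (Pr 0 (x : H)) + A 0 (P (x : H))))
        = Pr 0 (A' 0 (x : H))
    rw [hx]
    have h7 : Pr 0 (P (x : H)) = 0 := by
      conv_lhs => rw [← hx]
      exact hQP0 _
    have h6 : Pr 0 (A 0 (P (x : H))) = 0 := by
      rw [← hAc, h7, map_zero]
    have h9 : Pr 0 (A 0 (x : H)) = A 0 (x : H) := by
      rw [← hAc, hx]
    simp only [map_add, hQid, h9, h6, add_zero]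
    abel
  -- eventual equality with the trace function
  have hev1 : ∀ᶠ t in nhds (0:ℝ), ‖Pr t - Pr 0‖ < 1/2 := by
    have hb : Metric.ball (Pr 0) (1/2) ∈ nhds (Pr 0) := Metric.ball_mem_nhds _ (by norm_num)
    filter_upwards [hdiff.continuousAt.preimage_mem_nhds hb] with t ht
    simpa [dist_eq_norm] using ht
  have heq : (fun t : ℝ =>
        LinearMap.trace ℝ ↥(LinearMap.range ((Pr t : H →L[ℝ] H) : H →ₗ[ℝ] H))
          (LinearMap.restrict
            (((Pr t).comp ((A t).comp (Pr t)) : H →L[ℝ] H) : H →ₗ[ℝ] H)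
            (fun x _ => ⟨(A t) ((Pr t) x), rfl⟩)))
      =ᶠ[nhds (0:ℝ)]
      (fun t => T (Ring.inverse (Lop (Pr t)) * Lop (Pr t * (A t * Pr t)))) := by
    filter_upwards [hev0, hev1] with t htδ htn
    haveI : FiniteDimensional ℝ ↥(LinearMap.range ((Pr t : H →L[ℝ] H) : H →ₗ[ℝ] H)) :=
      hfin t htδ
    have hRid : ∀ x : H, Pr t (Pr t x) = Pr t x := fun x => by
      rw [← ContinuousLinearMap.comp_apply, hproj t htδ]
    have hRmem : ∀ x : H, x ∈ LinearMap.range ((Pr t : H →L[ℝ] H) : H →ₗ[ℝ] H) → Pr t x = x := by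
      rintro x ⟨y, rfl⟩; exact hRid y
    have hzero : ∀ x : H, x ∈ V → Pr t x = 0 → x = 0 := by
      intro x hx hx0
      have hQx : Pr 0 x = x := hQmem x hx
      have h7 : x = (Pr 0 - Pr t) x := by
        simp [ContinuousLinearMap.sub_apply, hQx, hx0]
      have h6 : ‖x‖ ≤ (1/2) * ‖x‖ := by
        calc ‖x‖ = ‖(Pr 0 - Pr t) x‖ := by rw [← h7]
          _ ≤ ‖Pr 0 - Pr t‖ * ‖x‖ := (Pr 0 - Pr t).le_opNorm x
          _ ≤ (1/2) * ‖x‖ := by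
              have h8 : ‖Pr 0 - Pr t‖ ≤ 1/2 := by rw [norm_sub_rev]; linarith
              exact mul_le_mul_of_nonneg_right h8 (norm_nonneg x)
      have h9 : ‖x‖ ≤ 0 := by linarith
      simpa using norm_le_zero_iff.mp h9
    have hzero' : ∀ x : H, x ∈ LinearMap.range ((Pr t : H →L[ℝ] H) : H →ₗ[ℝ] H) →
        Pr 0 x = 0 → x = 0 := by
      intro x hx hx0
      have hRx : Pr t x = x := hRmem x hx
      have h7 : x = (Pr t - Pr 0) x := by
        simp [ContinuousLinearMap.sub_apply, hRx, hx0]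
      have h6 : ‖x‖ ≤ (1/2) * ‖x‖ := by
        calc ‖x‖ = ‖(Pr t - Pr 0) x‖ := by rw [← h7]
          _ ≤ ‖Pr t - Pr 0‖ * ‖x‖ := (Pr t - Pr 0).le_opNorm x
          _ ≤ (1/2) * ‖x‖ := mul_le_mul_of_nonneg_right (le_of_lt htn) (norm_nonneg x)
      have h9 : ‖x‖ ≤ 0 := by linarith
      simpa using norm_le_zero_iff.mp h9
    -- `Lop (Pr t)` is a unit
    have hinj : Function.Injective (Lop (Pr t)) := by
      have hker : ∀ z : ↥V, Lop (Pr t) z = 0 → z = 0 := by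
        intro z hz
        have hval0 : Pr 0 (Pr t (z : H)) = 0 := congrArg Subtype.val hz
        have h8 : Pr t (z : H) = 0 := hzero' _ ⟨(z : H), rfl⟩ hval0
        exact Subtype.ext (hzero _ z.2 h8)
      intro a b hab
      have h10 := hker (a - b) (by rw [map_sub, hab, sub_self])
      exact sub_eq_zero.mp h10
    have hsurj : Function.Surjective (Lop (Pr t)) :=
      (LinearMap.injective_iff_surjective
        (f := ((Lop (Pr t) : ↥V →L[ℝ] ↥V) : ↥V →ₗ[ℝ] ↥V))).mp hinj
    have hUnit : IsUnit (Lop (Pr t)) := by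
      set el : ↥V ≃ₗ[ℝ] ↥V :=
        LinearEquiv.ofBijective ((Lop (Pr t) : ↥V →L[ℝ] ↥V) : ↥V →ₗ[ℝ] ↥V) ⟨hinj, hsurj⟩ with heldef
      have hec : ((el.toContinuousLinearEquiv : ↥V ≃L[ℝ] ↥V) : ↥V →L[ℝ] ↥V) = Lop (Pr t) := by
        ext x; rfl
      refine ⟨⟨_, ((el.toContinuousLinearEquiv.symm : ↥V ≃L[ℝ] ↥V) : ↥V →L[ℝ] ↥V), ?_, ?_⟩, hec⟩
      · ext x
        simp [ContinuousLinearMap.mul_apply]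
      · ext x
        simp [ContinuousLinearMap.mul_apply]
    have hw : (((Ring.inverse (Lop (Pr t)) : ↥V →L[ℝ] ↥V)) : ↥V →ₗ[ℝ] ↥V) ∘ₗ
        ((Lop (Pr t) : ↥V →L[ℝ] ↥V) : ↥V →ₗ[ℝ] ↥V) = LinearMap.id := by
      apply LinearMap.ext; intro x
      have h11 := congrArg (fun (M : ↥V →L[ℝ] ↥V) => M x) (Ring.inverse_mul_cancel _ hUnit)
      simpa using h11
    have hkey := key_trace (Pr 0) (Pr t) (A t) hQQ (hproj t htδ) hzero hzero'
      (((Ring.inverse (Lop (Pr t)) : ↥V →L[ℝ] ↥V)) : ↥V →ₗ[ℝ] ↥V)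
      ((Lop (Pr t * (A t * Pr t)) : ↥V →L[ℝ] ↥V) : ↥V →ₗ[ℝ] ↥V)
      ((Lop (Pr t) : ↥V →L[ℝ] ↥V) : ↥V →ₗ[ℝ] ↥V)
      (fun x => rfl) (fun x => rfl) hw
    rw [hkey, hTapp]
    rfl
  have hfinal2 := hfinal.congr_of_eventuallyEq heq
  exact hval ▸ hfinal2
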